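/- With the averaged states ρ^{ab}_odd = (1/2^{2n-4}) Σ_{k₁,k₂} ρ^{ab}_{k₁,k₂} where ρ^{ab}_{k₁,k₂} = (1/2^n) Σ_i |Ψ^{ab}_{k₁,k₂,i}⟩⟨Ψ^{ab}_{k₁,k₂,i}|, the trace distance D(ρ^{00}_odd, ρ^{11}_odd) = 1/2^{n-2}. -/

import Mathlib

open Matrix Finset
open scoped ComplexOrder Kronecker

open scoped MatrixOrder in
/-- Trace norm `tr √(Aᴴ A)` of a complex square matrix. -/
noncomputable def traceNorm {ι : Type*} [Fintype ι] [DecidableEq ι] (A : Matrix ι ι ℂ) : ℝ :=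
  ((CFC.sqrt (Aᴴ * A)).trace).re

/-- Bitwise XOR on bit strings. -/
def xo {n : ℕ} (i k : Fin n → Bool) : Fin n → Bool := fun j => xor (i j) (k j)

/-- Hamming weight of a bit string. -/
def wt {n : ℕ} (i : Fin n → Bool) : ℕ := (Finset.univ.filter fun j => i j = true).card

/-- Index type for `n = 2m` qubits, split into two halves of `m` qubits. -/
abbrev Idx (m : ℕ) := (Fin m → Bool) × (Fin m → Bool)

/-- Bitwise XOR on split bit strings. -/
def xo2 {m : ℕ} (i k : Idx m) : Idx m := (xo i.1 k.1, xo i.2 k.2)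

/-- Basis vector `|i⟩`. -/
def ket2 {m : ℕ} (i : Idx m) : Idx m → ℂ := fun j => if j = i then 1 else 0

/-- Sign `(-1)^a`. -/
def sgn (a : Bool) : ℂ := if a then -1 else 1

/-- The state `|Ψ^{ab}_{k₁,k₂,i}⟩ = ½(|i⟩+(-1)^a|i⊕k₁⟩+(-1)^b|i⊕k₂⟩+(-1)^{a+b}|i⊕k₁⊕k₂⟩)`. -/
noncomputable def Psi {m : ℕ} (k1 k2 i : Idx m) (a b : Bool) : Idx m → ℂ :=
  (1/2 : ℂ) • (ket2 i + sgn a • ket2 (xo2 i k1) + sgn b • ket2 (xo2 i k2)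
    + (sgn a * sgn b) • ket2 (xo2 (xo2 i k1) k2))

/-- Hermitian inner product `⟨u|v⟩`. -/
noncomputable def dot {m : ℕ} (u v : Idx m → ℂ) : ℂ :=
  ∑ j, starRingEnd ℂ (u j) * v j
/-- Outer product `|v⟩⟨v|`. -/
noncomputable def outer {m : ℕ} (v : Idx m → ℂ) : Matrix (Idx m) (Idx m) ℂ :=
  Matrix.of fun p q => v p * starRingEnd ℂ (v q)

/-- The set of admissible key pairs `(k₁,k₂) = ((k₁₁,k₁₂),(k₂₁,k₂₂))`:
`W_H(k₁₁)`, `W_H(k₂₂)` odd and `W_H(k₁₂)`, `W_H(k₂₁)` even. -/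
def KeyPairs (m : ℕ) : Finset (Idx m × Idx m) :=
  Finset.univ.filter fun q =>
    Odd (wt q.1.1) ∧ Even (wt q.1.2) ∧ Even (wt q.2.1) ∧ Odd (wt q.2.2)

/-- The averaged state `ρ^{ab}_odd`. -/
noncomputable def rhoOdd2 (m : ℕ) (a b : Bool) : Matrix (Idx m) (Idx m) ℂ :=
  ((1 : ℂ) / (2 ^ (4*m - 4) * 2 ^ (2*m))) •
    ∑ q ∈ KeyPairs m, ∑ i : Idx m, outer (Psi q.1 q.2 i a b)

/-! ### Auxiliary lemmas -/

section XorLemmas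
variable {m : ℕ}

lemma xo_right_inv (p k : Fin m → Bool) : xo (xo p k) k = p := by
  funext j; simp [xo, Bool.xor_assoc]

lemma xo_left_inv (q a : Fin m → Bool) : xo q (xo q a) = a := by
  funext j; simp [xo, ← Bool.xor_assoc]

lemma xo2_right_inv (p k : Idx m) : xo2 (xo2 p k) k = p := by
  cases p; simp [xo2, xo_right_inv]

lemma xo2_left_inv (q a : Idx m) : xo2 q (xo2 q a) = a := by
  cases a; simp [xo2, xo_left_inv]

lemma xo2_eq_iff {p q k : Idx m} : xo2 p k = q ↔ p = xo2 q k := by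
  constructor
  · rintro rfl; rw [xo2_right_inv]
  · rintro rfl; rw [xo2_right_inv]

lemma xo2_solve_iff {p q a : Idx m} : p = xo2 q a ↔ a = xo2 q p := by
  constructor
  · rintro rfl; rw [xo2_left_inv]
  · rintro rfl; rw [xo2_left_inv]

lemma xo2_cancel_iff {a b k : Idx m} : xo2 a k = xo2 b k ↔ a = b :=
  ⟨fun h => by rw [← xo2_right_inv a k, h, xo2_right_inv], fun h => by rw [h]⟩

lemma bool_xor_right_comm (x a b : Bool) : xor (xor x a) b = xor (xor x b) a := by
  cases x <;> cases a <;> cases b <;> rfl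

lemma xo_right_comm (p a b : Fin m → Bool) : xo (xo p a) b = xo (xo p b) a := by
  funext j; exact bool_xor_right_comm _ _ _

lemma xo2_right_comm (p a b : Idx m) : xo2 (xo2 p a) b = xo2 (xo2 p b) a := by
  simp [xo2, xo_right_comm]

end XorLemmas

section Chi
variable {m : ℕ}

/-- character `(-1)^{wt j}` as a product. -/
noncomputable def chi (j : Fin m → Bool) : ℂ := ∏ x, if j x then -1 else 1

lemma chi_eq (j : Fin m → Bool) : chi j = (-1) ^ wt j := by
  rw [chi, Finset.prod_ite, Finset.prod_const, Finset.prod_const_one, mul_one, wt]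

lemma conj_chi (j : Fin m → Bool) : (starRingEnd ℂ) (chi j) = chi j := by
  rw [chi, map_prod]
  exact Finset.prod_congr rfl fun x _ => by split <;> simp

lemma chi_mul_self (j : Fin m → Bool) : chi j * chi j = 1 := by
  rw [chi, ← Finset.prod_mul_distrib]
  exact Finset.prod_eq_one fun x _ => by split <;> norm_num

lemma chi_factor (y z : Bool) :
    (if (xor y z) = true then (-1:ℂ) else 1)
      = (if y = true then -1 else 1) * (if z = true then -1 else 1) := by
  cases y <;> cases z <;> simp

lemma chi_xo (a b : Fin m → Bool) : chi (xo a b) = chi a * chi b := by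
  rw [chi, chi, chi, ← Finset.prod_mul_distrib]
  refine Finset.prod_congr rfl fun x _ => ?_
  simp only [xo]
  exact chi_factor (a x) (b x)

lemma odd_wt_add (j : Fin m → Bool) (i0 : Fin m) :
    Odd (wt (Function.update j i0 (!j i0)) + wt j) := by
  have h : ∀ f : Fin m → Bool,
      wt f = (if f i0 = true then 1 else 0)
        + ∑ x ∈ univ.erase i0, (if f x = true then 1 else 0) := by
    intro f
    rw [wt, Finset.card_filter, ← Finset.add_sum_erase _ _ (Finset.mem_univ i0)]
  rw [h, h]
  have hR : ∑ x ∈ univ.erase i0, (if Function.update j i0 (!j i0) x = true then 1 else 0)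
      = ∑ x ∈ univ.erase i0, (if j x = true then 1 else 0) :=
    Finset.sum_congr rfl fun x hx => by rw [Function.update_of_ne (Finset.mem_erase.1 hx).1]
  rw [hR, Function.update_self]
  cases hj : j i0 <;> simp [Nat.odd_iff] <;> omega

def oddF (m : ℕ) : Finset (Fin m → Bool) := univ.filter fun j => Odd (wt j)
def evenF (m : ℕ) : Finset (Fin m → Bool) := univ.filter fun j => Even (wt j)

lemma card_oddF_eq (hm : 1 ≤ m) : (oddF m).card = (evenF m).card := by
  classical
  set i0 : Fin m := ⟨0, hm⟩
  have hflip : ∀ j : Fin m → Bool,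
      Function.update (Function.update j i0 (!j i0)) i0 (!(Function.update j i0 (!j i0)) i0)
        = j := by
    intro j
    rw [Function.update_self, Bool.not_not, Function.update_idem, Function.update_eq_self]
  have hmem : ∀ j, Odd (wt j) → Even (wt (Function.update j i0 (!j i0))) := by
    intro j hj
    have := odd_wt_add j i0
    rw [Nat.odd_add] at this
    exact Nat.not_odd_iff_even.1 fun h => (Nat.not_even_iff_odd.2 hj) (this.1 h)
  have hmem' : ∀ j, Even (wt j) → Odd (wt (Function.update j i0 (!j i0))) := by
    intro j hj
    have := odd_wt_add j i0
    rw [Nat.odd_add] at this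
    exact this.2 hj
  refine Finset.card_bij' (fun j _ => Function.update j i0 (!j i0))
    (fun j _ => Function.update j i0 (!j i0)) ?_ ?_ ?_ ?_
  · intro a ha
    simp only [oddF, evenF, Finset.mem_filter, Finset.mem_univ, true_and] at ha ⊢
    exact hmem a ha
  · intro a ha
    simp only [oddF, evenF, Finset.mem_filter, Finset.mem_univ, true_and] at ha ⊢
    exact hmem' a ha
  · intro a _; exact hflip a
  · intro a _; exact hflip a

lemma card_add (m : ℕ) : (oddF m).card + (evenF m).card = 2 ^ m := by
  classical
  have h := Finset.card_filter_add_card_filter_not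
    (s := (univ : Finset (Fin m → Bool))) (p := fun j => Odd (wt j))
  have he : (univ.filter fun j : Fin m → Bool => ¬ Odd (wt j)) = evenF m := by
    simp only [evenF, Nat.not_odd_iff_even]
  have ho : (univ.filter fun j : Fin m → Bool => Odd (wt j)) = oddF m := rfl
  rw [he, ho] at h
  rw [h, Finset.card_univ]
  simp [Fintype.card_fun]

lemma card_oddF (hm : 1 ≤ m) : (oddF m).card = 2 ^ (m - 1) := by
  have h1 := card_oddF_eq hm
  have h2 := card_add m
  have h3 : (2:ℕ) ^ m = 2 * 2 ^ (m - 1) := by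
    conv_lhs => rw [show m = (m-1)+1 by omega]
    rw [pow_succ]; ring
  omega

lemma card_evenF (hm : 1 ≤ m) : (evenF m).card = 2 ^ (m - 1) := by
  rw [← card_oddF_eq hm, card_oddF hm]

lemma sum_chi (hm : 1 ≤ m) : ∑ j : Fin m → Bool, chi j = 0 := by
  classical
  rw [← Finset.sum_filter_add_sum_filter_not univ (fun j => Odd (wt j))]
  have h1 : ∀ j ∈ (univ.filter fun j : Fin m → Bool => Odd (wt j)), chi j = -1 := fun j hj => by
    rw [chi_eq]; exact Odd.neg_one_pow (Finset.mem_filter.1 hj).2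
  have h2 : ∀ j ∈ (univ.filter fun j : Fin m → Bool => ¬ Odd (wt j)), chi j = 1 := fun j hj => by
    rw [chi_eq]; exact Even.neg_one_pow (Nat.not_odd_iff_even.1 (Finset.mem_filter.1 hj).2)
  rw [Finset.sum_congr rfl h1, Finset.sum_congr rfl h2, Finset.sum_const, Finset.sum_const]
  have he : (univ.filter fun j : Fin m → Bool => ¬ Odd (wt j)) = evenF m := by
    simp only [evenF, Nat.not_odd_iff_even]
  have ho : (univ.filter fun j : Fin m → Bool => Odd (wt j)) = oddF m := rfl
  rw [he, ho, card_oddF_eq hm]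
  simp

end Chi

section Esec
variable {m : ℕ}

noncomputable def eI (u v : Idx m) : ℂ := if u = v then 1 else 0

lemma eI_congr {u v u' v' : Idx m} (h : (u = v) ↔ (u' = v')) : eI u v = eI u' v' := by
  unfold eI; exact if_congr h rfl rfl

lemma conj_eI (u v : Idx m) : (starRingEnd ℂ) (eI u v) = eI u v := by
  unfold eI; split <;> simp

lemma conj_sgn (a : Bool) : (starRingEnd ℂ) (sgn a) = sgn a := by
  unfold sgn; split <;> simp

lemma sgn_false : sgn false = 1 := rfl
lemma sgn_true : sgn true = -1 := rfl

lemma sum_eI_mul (u v : Idx m) : ∑ i : Idx m, eI i u * eI i v = eI u v := by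
  unfold eI
  rw [Finset.sum_eq_single u]
  · simp
  · intro b _ hb; simp [hb]
  · simp

lemma Psi_apply (k1 k2 i : Idx m) (a b : Bool) (p : Idx m) :
    Psi k1 k2 i a b p = (1/2 : ℂ) * (eI i p + sgn a * eI i (xo2 p k1) + sgn b * eI i (xo2 p k2)
      + sgn a * sgn b * eI i (xo2 (xo2 p k1) k2)) := by
  have h1 : (p = i) ↔ (i = p) := eq_comm
  have h2 : (p = xo2 i k1) ↔ (i = xo2 p k1) := Iff.trans eq_comm xo2_eq_iff
  have h3 : (p = xo2 i k2) ↔ (i = xo2 p k2) := Iff.trans eq_comm xo2_eq_iff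
  have h4 : (p = xo2 (xo2 i k1) k2) ↔ (i = xo2 (xo2 p k1) k2) := by
    constructor
    · rintro rfl
      rw [xo2_right_comm (xo2 i k1) k2 k1, xo2_right_inv, xo2_right_inv]
    · rintro rfl
      rw [xo2_right_comm (xo2 p k1) k2 k1, xo2_right_inv, xo2_right_inv]
  simp only [Psi, Pi.smul_apply, Pi.add_apply, smul_eq_mul, ket2, eI]
  rw [if_congr h1 rfl rfl, if_congr h2 rfl rfl, if_congr h3 rfl rfl, if_congr h4 rfl rfl]

lemma conj_Psi (k1 k2 i : Idx m) (a b : Bool) (q : Idx m) :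
    (starRingEnd ℂ) (Psi k1 k2 i a b q) = (1/2 : ℂ) * (eI i q + sgn a * eI i (xo2 q k1)
      + sgn b * eI i (xo2 q k2) + sgn a * sgn b * eI i (xo2 (xo2 q k1) k2)) := by
  rw [Psi_apply]
  simp only [_root_.map_mul, map_add, _root_.map_one, map_div₀, map_ofNat, conj_eI, conj_sgn]

lemma sum_diff (k1 k2 p q : Idx m) :
    ∑ i : Idx m, (Psi k1 k2 i false false p * (starRingEnd ℂ) (Psi k1 k2 i false false q)
      - Psi k1 k2 i true true p * (starRingEnd ℂ) (Psi k1 k2 i true true q))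
    = 2 * (eI p (xo2 q k1) + eI p (xo2 q k2)) := by
  have key : ∀ i : Idx m,
      Psi k1 k2 i false false p * (starRingEnd ℂ) (Psi k1 k2 i false false q)
        - Psi k1 k2 i true true p * (starRingEnd ℂ) (Psi k1 k2 i true true q)
      = (1/2 : ℂ) * (eI i p * eI i (xo2 q k1) + eI i p * eI i (xo2 q k2)
        + eI i (xo2 (xo2 p k1) k2) * eI i (xo2 q k1) + eI i (xo2 (xo2 p k1) k2) * eI i (xo2 q k2)
        + eI i (xo2 p k1) * eI i q + eI i (xo2 p k1) * eI i (xo2 (xo2 q k1) k2)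
        + eI i (xo2 p k2) * eI i q + eI i (xo2 p k2) * eI i (xo2 (xo2 q k1) k2)) := by
    intro i
    simp only [conj_Psi, Psi_apply, sgn_false, sgn_true, _root_.map_mul, map_add,
      _root_.map_one, map_div₀, map_ofNat, map_neg, conj_eI, conj_sgn]
    ring
  rw [Finset.sum_congr rfl fun i _ => key i, ← Finset.mul_sum]
  simp only [Finset.sum_add_distrib, sum_eI_mul]
  have h3 : (xo2 (xo2 p k1) k2 = xo2 q k1) ↔ (p = xo2 q k2) := by
    rw [xo2_right_comm p k1 k2, xo2_cancel_iff]; exact xo2_eq_iff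
  have h4 : (xo2 (xo2 p k1) k2 = xo2 q k2) ↔ (p = xo2 q k1) := by
    rw [xo2_cancel_iff]; exact xo2_eq_iff
  have h5 : (xo2 p k1 = q) ↔ (p = xo2 q k1) := xo2_eq_iff
  have h6 : (xo2 p k1 = xo2 (xo2 q k1) k2) ↔ (p = xo2 q k2) := by
    rw [xo2_right_comm q k1 k2, xo2_cancel_iff]
  have h7 : (xo2 p k2 = q) ↔ (p = xo2 q k2) := xo2_eq_iff
  have h8 : (xo2 p k2 = xo2 (xo2 q k1) k2) ↔ (p = xo2 q k1) := by
    rw [xo2_cancel_iff]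
  rw [eI_congr h3, eI_congr h4, eI_congr h5, eI_congr h6, eI_congr h7, eI_congr h8]
  ring

end Esec

section Keys
variable {m : ℕ}

def KS1 (m : ℕ) : Finset (Idx m) := univ.filter fun k => Odd (wt k.1) ∧ Even (wt k.2)
def KS2 (m : ℕ) : Finset (Idx m) := univ.filter fun k => Even (wt k.1) ∧ Odd (wt k.2)

lemma keyPairs_eq (m : ℕ) : KeyPairs m = KS1 m ×ˢ KS2 m := by
  ext x
  simp only [KeyPairs, KS1, KS2, Finset.mem_filter, Finset.mem_univ, true_and,
    Finset.mem_product]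
  tauto

lemma card_KS1 (hm : 1 ≤ m) : (KS1 m).card = 2 ^ (m-1) * 2 ^ (m-1) := by
  have : KS1 m = (oddF m) ×ˢ (evenF m) := by
    ext x
    simp [KS1, oddF, evenF, Finset.mem_product]
  rw [this, Finset.card_product, card_oddF hm, card_evenF hm]

lemma card_KS2 (hm : 1 ≤ m) : (KS2 m).card = 2 ^ (m-1) * 2 ^ (m-1) := by
  have : KS2 m = (evenF m) ×ˢ (oddF m) := by
    ext x
    simp [KS2, oddF, evenF, Finset.mem_product]
  rw [this, Finset.card_product, card_oddF hm, card_evenF hm]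

lemma sum_ind (p q : Idx m) (S : Finset (Idx m)) :
    ∑ a ∈ S, eI p (xo2 q a) = if xo2 q p ∈ S then (1:ℂ) else 0 := by
  have he : ∀ (a : Idx m), eI p (xo2 q a) = if a = xo2 q p then (1:ℂ) else 0 := by
    intro a; unfold eI; exact if_congr xo2_solve_iff rfl rfl
  rw [Finset.sum_congr rfl (fun a _ => he a)]
  exact Finset.sum_ite_eq' S (xo2 q p) (fun _ => (1:ℂ))

lemma sum_keys (p q : Idx m) :
    ∑ x ∈ KeyPairs m, (eI p (xo2 q x.1) + eI p (xo2 q x.2))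
      = ((KS2 m).card : ℂ) * (if xo2 q p ∈ KS1 m then (1:ℂ) else 0)
        + ((KS1 m).card : ℂ) * (if xo2 q p ∈ KS2 m then (1:ℂ) else 0) := by
  rw [keyPairs_eq, Finset.sum_product]
  simp only [Finset.sum_add_distrib, Finset.sum_const, nsmul_eq_mul, sum_ind, ← Finset.mul_sum]

lemma ind_add (d : Idx m) :
    ((if d ∈ KS1 m then (1:ℂ) else 0) + (if d ∈ KS2 m then 1 else 0))
      = (1 - chi d.1 * chi d.2) / 2 := by
  have m1 : d ∈ KS1 m ↔ (Odd (wt d.1) ∧ Even (wt d.2)) := by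
    simp [KS1]
  have m2 : d ∈ KS2 m ↔ (Even (wt d.1) ∧ Odd (wt d.2)) := by
    simp [KS2]
  rw [chi_eq, chi_eq]
  rcases Nat.even_or_odd (wt d.1) with h1 | h1 <;> rcases Nat.even_or_odd (wt d.2) with h2 | h2
  · rw [if_neg (by rw [m1]; exact fun h => Nat.not_odd_iff_even.2 h1 h.1),
        if_neg (by rw [m2]; exact fun h => Nat.not_odd_iff_even.2 h2 h.2),
        h1.neg_one_pow, h2.neg_one_pow]
    norm_num
  · rw [if_neg (by rw [m1]; exact fun h => Nat.not_odd_iff_even.2 h1 h.1),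
        if_pos (m2.2 ⟨h1, h2⟩), h1.neg_one_pow, h2.neg_one_pow]
    norm_num
  · rw [if_pos (m1.2 ⟨h1, h2⟩),
        if_neg (by rw [m2]; exact fun h => Nat.not_odd_iff_even.2 h2 h.2),
        h1.neg_one_pow, h2.neg_one_pow]
    norm_num
  · rw [if_neg (by rw [m1]; exact fun h => Nat.not_even_iff_odd.2 h2 h.2),
        if_neg (by rw [m2]; exact fun h => Nat.not_even_iff_odd.2 h1 h.1),
        h1.neg_one_pow, h2.neg_one_pow]
    norm_num

end Keys

section Outer
variable {m : ℕ}

lemma outer_hermitian (v : Idx m → ℂ) : (outer v).IsHermitian := by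
  unfold Matrix.IsHermitian
  ext p q
  simp only [Matrix.conjTranspose_apply, outer, Matrix.of_apply, _root_.map_mul,
    Complex.conj_conj, RCLike.star_def]
  ring

lemma outer_posSemidef (v : Idx m → ℂ) : (outer v).PosSemidef := by
  refine Matrix.PosSemidef.of_dotProduct_mulVec_nonneg (outer_hermitian v) fun x => ?_
  have h : dotProduct (star x) ((outer v) *ᵥ x)
      = (∑ p, v p * (starRingEnd ℂ) (x p)) * (∑ r, (starRingEnd ℂ) (v r) * x r) := by
    simp only [dotProduct, Matrix.mulVec, outer, Matrix.of_apply, Pi.star_apply,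
      RCLike.star_def]
    rw [Finset.sum_mul_sum]
    refine Finset.sum_congr rfl fun p _ => ?_
    rw [Finset.mul_sum]
    exact Finset.sum_congr rfl fun r _ => by ring
  have hz : star (∑ r, (starRingEnd ℂ) (v r) * x r) = ∑ p, v p * (starRingEnd ℂ) (x p) := by
    rw [star_sum]
    exact Finset.sum_congr rfl fun r _ => by
      simp [RCLike.star_def, mul_comm]
  rw [h, ← hz]
  exact star_mul_self_nonneg _

lemma outer_mul_outer (u v : Idx m → ℂ) :
    outer u * outer v = dot u v • (Matrix.of fun p q => u p * (starRingEnd ℂ) (v q)) := by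
  ext p q
  simp only [Matrix.mul_apply, outer, Matrix.of_apply, Matrix.smul_apply, smul_eq_mul, dot]
  rw [Finset.sum_mul]
  exact Finset.sum_congr rfl fun r _ => by ring

lemma trace_outer (v : Idx m → ℂ) : (outer v).trace = ∑ p, v p * (starRingEnd ℂ) (v p) := by
  simp [Matrix.trace, Matrix.diag, outer]

end Outer


section Main

lemma delta_eq (n : ℕ) :
    rhoOdd2 (n+1) false false - rhoOdd2 (n+1) true true
      = outer (fun _ : Idx (n+1) => (1/2^(2*n+1) : ℂ))
        - outer (fun j : Idx (n+1) => (1/2^(2*n+1) : ℂ) * chi j.1 * chi j.2) := by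
  have e1 : 4*(n+1)-4 = 4*n := by omega
  have hm1 : 1 ≤ n + 1 := Nat.succ_le_succ (Nat.zero_le n)
  ext p q
  simp only [Matrix.sub_apply, rhoOdd2, Matrix.smul_apply, Matrix.sum_apply, smul_eq_mul, e1]
  rw [← mul_sub, ← Finset.sum_sub_distrib]
  have hk : ∀ x ∈ KeyPairs (n+1),
      ((∑ i, (outer (Psi x.1 x.2 i false false)) p q)
          - ∑ i, (outer (Psi x.1 x.2 i true true)) p q)
        = 2 * (eI p (xo2 q x.1) + eI p (xo2 q x.2)) := by
    intro x _
    rw [← Finset.sum_sub_distrib]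
    simp only [outer, Matrix.of_apply]
    exact sum_diff x.1 x.2 p q
  rw [Finset.sum_congr rfl hk, ← Finset.mul_sum, sum_keys p q,
    card_KS1 hm1, card_KS2 hm1, Nat.add_sub_cancel, ← mul_add, ind_add]
  have hx1 : (xo2 q p).1 = xo q.1 p.1 := rfl
  have hx2 : (xo2 q p).2 = xo q.2 p.2 := rfl
  rw [hx1, hx2, chi_xo, chi_xo]
  simp only [outer, Matrix.of_apply, Matrix.sub_apply, _root_.map_mul, map_div₀,
    _root_.map_one, map_pow, map_ofNat, conj_chi]
  push_cast
  field_simp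
  ring

open scoped MatrixOrder in
lemma traceNorm_diff (n : ℕ) :
    traceNorm (outer (fun _ : Idx (n+1) => (1/2^(2*n+1) : ℂ))
      - outer (fun j : Idx (n+1) => (1/2^(2*n+1) : ℂ) * chi j.1 * chi j.2))
    = 2 / 2^(2*n) := by
  have hm1 : 1 ≤ n + 1 := Nat.succ_le_succ (Nat.zero_le n)
  set t : ℂ := 1/2^(2*n+1) with ht
  set u0 : Idx (n+1) → ℂ := fun _ => t with hu0
  set u1 : Idx (n+1) → ℂ := fun j => t * chi j.1 * chi j.2 with hu1
  have hconj_t : (starRingEnd ℂ) t = t := by rw [ht]; simp [map_ofNat]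
  have hNc : (((Finset.univ : Finset (Idx (n+1))).card : ℂ)) * ((starRingEnd ℂ) t * t)
      = 1/2^(2*n) := by
    rw [hconj_t, ht, Finset.card_univ]
    have hcard : Fintype.card (Idx (n+1)) = 2^(n+1) * 2^(n+1) := by
      simp [Fintype.card_fun]
    rw [hcard]
    push_cast
    have h2 : (2:ℂ) ≠ 0 := two_ne_zero
    field_simp
    ring
  have d00 : dot u0 u0 = 1/2^(2*n) := by
    unfold dot
    rw [hu0]
    simp only
    rw [Finset.sum_const, nsmul_eq_mul, hNc]
  have d11 : dot u1 u1 = 1/2^(2*n) := by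
    unfold dot
    have hterm : ∀ j : Idx (n+1),
        (starRingEnd ℂ) (u1 j) * u1 j = (starRingEnd ℂ) t * t := by
      intro j
      rw [hu1]
      simp only
      rw [_root_.map_mul, _root_.map_mul, conj_chi, conj_chi]
      have h1 := chi_mul_self j.1
      have h2 := chi_mul_self j.2
      calc (starRingEnd ℂ) t * chi j.1 * chi j.2 * (t * chi j.1 * chi j.2)
          = ((starRingEnd ℂ) t * t) * (chi j.1 * chi j.1) * (chi j.2 * chi j.2) := by ring
        _ = (starRingEnd ℂ) t * t := by rw [h1, h2]; ring
    rw [Finset.sum_congr rfl fun j _ => hterm j, Finset.sum_const, nsmul_eq_mul, hNc]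
  have hz : ∑ j : Idx (n+1), chi j.1 * chi j.2 = 0 := by
    rw [Fintype.sum_prod_type, ← Fintype.sum_mul_sum, sum_chi hm1, zero_mul]
  have d01 : dot u0 u1 = 0 := by
    unfold dot
    have hterm : ∀ j : Idx (n+1),
        (starRingEnd ℂ) (u0 j) * u1 j = ((starRingEnd ℂ) t * t) * (chi j.1 * chi j.2) := by
      intro j; rw [hu0, hu1]; simp only; ring
    rw [Finset.sum_congr rfl fun j _ => hterm j, ← Finset.mul_sum, hz, mul_zero]
  have d10 : dot u1 u0 = 0 := by
    unfold dot
    have hterm : ∀ j : Idx (n+1),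
        (starRingEnd ℂ) (u1 j) * u0 j = ((starRingEnd ℂ) t * t) * (chi j.1 * chi j.2) := by
      intro j
      rw [hu0, hu1]
      simp only [_root_.map_mul, conj_chi, hconj_t]
      ring
    rw [Finset.sum_congr rfl fun j _ => hterm j, ← Finset.mul_sum, hz, mul_zero]
  have p00 : outer u0 * outer u0 = (1/2^(2*n) : ℂ) • outer u0 := by
    rw [outer_mul_outer, d00]; rfl
  have p11 : outer u1 * outer u1 = (1/2^(2*n) : ℂ) • outer u1 := by
    rw [outer_mul_outer, d11]; rfl
  have p01 : outer u0 * outer u1 = 0 := by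
    rw [outer_mul_outer, d01, zero_smul]
  have p10 : outer u1 * outer u0 = 0 := by
    rw [outer_mul_outer, d10, zero_smul]
  set B := outer u0 - outer u1 with hB
  set S := outer u0 + outer u1 with hS
  have hBH : Bᴴ = B := by
    rw [hB, Matrix.conjTranspose_sub, outer_hermitian u0, outer_hermitian u1]
  have hsq : S ^ 2 = Bᴴ * B := by
    rw [hBH, pow_two, hS, hB, add_mul, mul_add, mul_add, sub_mul, mul_sub, mul_sub,
      p00, p11, p01, p10]
    abel
  have hPSD : S.PosSemidef := by
    rw [hS]; exact (outer_posSemidef u0).add (outer_posSemidef u1)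
  have hsqrt : S = CFC.sqrt (Bᴴ * B) := by
    rw [← hsq]; exact (CFC.sqrt_sq S (Matrix.nonneg_iff_posSemidef.2 hPSD)).symm
  unfold traceNorm
  rw [← hsqrt]
  have hdt : ∀ v : Idx (n+1) → ℂ,
      ∑ p : Idx (n+1), v p * (starRingEnd ℂ) (v p) = dot v v := fun v =>
    Finset.sum_congr rfl fun p _ => mul_comm _ _
  have htr : S.trace = (2/2^(2*n) : ℂ) := by
    rw [hS, Matrix.trace_add, trace_outer, trace_outer, hdt, hdt, d00, d11]
    ring
  rw [htr]
  have : (2/2^(2*n) : ℂ) = ((2/2^(2*n) : ℝ) : ℂ) := by push_cast; ring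
  rw [this, Complex.ofReal_re]

end Main

theorem traceDist_rho00_rho11 (m : ℕ) (hm : 1 ≤ m) :
    (1/2 : ℝ) * traceNorm (rhoOdd2 m false false - rhoOdd2 m true true)
      = 1 / 2 ^ (2*m - 2) := by
  obtain ⟨n, rfl⟩ : ∃ n, m = n + 1 := ⟨m - 1, by omega⟩
  rw [delta_eq n, traceNorm_diff n, show 2*(n+1)-2 = 2*n by omega]
  ring
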